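/- A continuous linear operator T on a separable Fréchet space is multiply recurrent if and only if it is \overline{AP}-recurrent, i.e., there is a dense set of vectors x such that for every open neighborhood U of x and every m there is a single k such that N_T(x,U) contains infinitely many arithmetic progressions of length m and common difference k (infinitely many a with {a, a+k, ..., a+mk} ⊆ N_T(x,U)). -/

import Mathlib

open Filter Topology

/-- `A ∈ \overline{AP}`: for every `m` there is a common difference `k` such that `A`
contains infinitely many arithmetic progressions of length `m` and difference `k`. -/
def InOverlineAP (A : Set ℕ) : Prop :=
  ∀ m : ℕ, ∃ k : ℕ, 1 ≤ k ∧ {a : ℕ | ∀ j ≤ m, a + j * k ∈ A}.Infinite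

/-- A recurrent point returns to each of its open neighborhoods infinitely often. -/
lemma aux_infinite_returns {X : Type*} [TopologicalSpace X] [AddCommGroup X] [Module ℝ X]
    (T : X →L[ℝ] X) (x : X)
    (hrec : ∀ V : Set X, IsOpen V → x ∈ V → ∃ k : ℕ, 1 ≤ k ∧ (T ^ k) x ∈ V)
    (U : Set X) (hU : IsOpen U) (hx : x ∈ U) : {n : ℕ | (T ^ n) x ∈ U}.Infinite := by
  have key : ∀ N : ℕ, ∃ n, N < n ∧ (T ^ n) x ∈ U := by
    intro N
    induction N with
    | zero =>
      obtain ⟨k, hk, hkU⟩ := hrec U hU hx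
      exact ⟨k, hk, hkU⟩
    | succ N ih =>
      obtain ⟨n, hn, hnU⟩ := ih
      obtain ⟨k, hk, hkW⟩ := hrec ((T ^ n) ⁻¹' U) (hU.preimage (T ^ n).continuous) hnU
      refine ⟨n + k, by omega, ?_⟩
      have hpow : (T ^ (n + k)) x = (T ^ n) ((T ^ k) x) := by rw [pow_add]; rfl
      rw [hpow]; exact hkW
  apply Set.infinite_of_forall_exists_gt
  intro N
  obtain ⟨n, hn, hnU⟩ := key N
  exact ⟨n, hnU, hn⟩

/-- A pointwise multiply recurrent vector has `\overline{AP}` return sets. -/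
lemma aux_overlineAP_of_multiRec {X : Type*} [TopologicalSpace X] [AddCommGroup X] [Module ℝ X]
    (T : X →L[ℝ] X) (x : X)
    (hmr : ∀ U : Set X, IsOpen U → x ∈ U → ∀ m : ℕ,
      ∃ k : ℕ, 1 ≤ k ∧ ∀ j ≤ m, (T ^ (j * k)) x ∈ U)
    (U : Set X) (hU : IsOpen U) (hx : x ∈ U) :
    InOverlineAP {n : ℕ | (T ^ n) x ∈ U} := by
  have hrec : ∀ V : Set X, IsOpen V → x ∈ V → ∃ k : ℕ, 1 ≤ k ∧ (T ^ k) x ∈ V := by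
    intro V hV hxV
    obtain ⟨k, hk, h⟩ := hmr V hV hxV 1
    exact ⟨k, hk, by simpa using h 1 le_rfl⟩
  intro m
  obtain ⟨k, hk, hAP⟩ := hmr U hU hx m
  refine ⟨k, hk, ?_⟩
  set W : Set X := ⋂ j ∈ Set.Iic m, (T ^ (j * k)) ⁻¹' U with hW
  have hWopen : IsOpen W :=
    (Set.finite_Iic m).isOpen_biInter fun j _ => hU.preimage (T ^ (j * k)).continuous
  have hxW : x ∈ W := by
    rw [hW, Set.mem_iInter₂]
    intro j hj
    exact hAP j hj
  have hinf := aux_infinite_returns T x hrec W hWopen hxW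
  refine hinf.mono ?_
  intro a ha
  intro j hj
  have haW : (T ^ a) x ∈ W := ha
  rw [hW, Set.mem_iInter₂] at haW
  have := haW j hj
  simp only [Set.mem_preimage] at this
  show (T ^ (a + j * k)) x ∈ U
  have hpow : (T ^ (a + j * k)) x = (T ^ (j * k)) ((T ^ a) x) := by
    rw [add_comm, pow_add]; rfl
  rw [hpow]; exact this

theorem multiplyRecurrent_iff_overlineAP_recurrent
    {X : Type*} [AddCommGroup X] [Module ℝ X] [UniformSpace X] [IsUniformAddGroup X]
    [ContinuousSMul ℝ X] [LocallyConvexSpace ℝ X] [CompleteSpace X]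
    [TopologicalSpace.MetrizableSpace X] [TopologicalSpace.SeparableSpace X]
    (T : X →L[ℝ] X) :
    (∀ U : Set X, IsOpen U → U.Nonempty → ∀ m : ℕ,
        ∃ k : ℕ, 1 ≤ k ∧ ∃ x ∈ U, ∀ j ≤ m, (T ^ (j * k)) x ∈ U)
    ↔ Dense {x : X | ∀ U : Set X, IsOpen U → x ∈ U →
        InOverlineAP {n : ℕ | (T ^ n) x ∈ U}} := by
  constructor
  · intro h
    -- Set up Baire category machinery
    haveI : (uniformity X).IsCountablyGenerated := by
      rw [uniformity_eq_comap_nhds_zero X]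
      infer_instance
    haveI : SecondCountableTopology X := UniformSpace.secondCountable_of_separable X
    haveI : BaireSpace X := by
      letI : PseudoMetricSpace X := UniformSpace.pseudoMetricSpace X
      infer_instance
    obtain ⟨b, hbc, -, hbasis⟩ := TopologicalSpace.exists_countable_basis X
    haveI : Countable b := hbc.to_subtype
    -- the open dense sets
    set f : b × ℕ → Set X := fun p =>
      (closure (p.1 : Set X))ᶜ ∪
        {x : X | ∃ k : ℕ, 1 ≤ k ∧ ∀ j ≤ p.2, (T ^ (j * k)) x ∈ (p.1 : Set X)} with hf
    have hopen : ∀ p, IsOpen (f p) := by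
      rintro ⟨V, m⟩
      apply IsOpen.union isClosed_closure.isOpen_compl
      have : {x : X | ∃ k : ℕ, 1 ≤ k ∧ ∀ j ≤ m, (T ^ (j * k)) x ∈ (V : Set X)}
          = ⋃ k : ℕ, ⋃ (_ : 1 ≤ k), ⋂ j ∈ Set.Iic m, (T ^ (j * k)) ⁻¹' (V : Set X) := by
        ext x
        simp [Set.mem_iUnion, Set.mem_iInter₂]
      rw [this]
      refine isOpen_iUnion fun k => isOpen_iUnion fun _ => ?_
      exact (Set.finite_Iic m).isOpen_biInter fun j _ =>
        (hbasis.isOpen V.2).preimage (T ^ (j * k)).continuous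
    have hdense : ∀ p, Dense (f p) := by
      rintro ⟨V, m⟩
      rw [dense_iff_inter_open]
      intro W hW hWne
      by_cases hsub : W ⊆ closure (V : Set X)
      · -- W meets V
        obtain ⟨w, hw⟩ := hWne
        have hwc : w ∈ closure (V : Set X) := hsub hw
        rw [mem_closure_iff] at hwc
        obtain ⟨v, hvW, hvV⟩ := hwc W hW hw
        obtain ⟨k, hk, x, hxWV, hAP⟩ := h (W ∩ (V : Set X)) (hW.inter (hbasis.isOpen V.2))
          ⟨v, hvW, hvV⟩ m
        refine ⟨x, hxWV.1, Or.inr ⟨k, hk, fun j hj => (hAP j hj).2⟩⟩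
      · obtain ⟨w, hwW, hwc⟩ := Set.not_subset.1 hsub
        exact ⟨w, hwW, Or.inl hwc⟩
    have hDense : Dense (⋂ p, f p) := dense_iInter_of_isOpen hopen hdense
    refine hDense.mono ?_
    intro x hx
    have hmr : ∀ U : Set X, IsOpen U → x ∈ U → ∀ m : ℕ,
        ∃ k : ℕ, 1 ≤ k ∧ ∀ j ≤ m, (T ^ (j * k)) x ∈ U := by
      intro U hU hxU m
      obtain ⟨V, hVb, hxV, hVU⟩ := hbasis.exists_subset_of_mem_open hxU hU
      have hxf : x ∈ f (⟨V, hVb⟩, m) := Set.mem_iInter.1 hx _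
      rcases hxf with hxc | ⟨k, hk, hAP⟩
      · exact absurd (subset_closure hxV) hxc
      · exact ⟨k, hk, fun j hj => hVU (hAP j hj)⟩
    exact fun U hU hxU => aux_overlineAP_of_multiRec T x hmr U hU hxU
  · intro hD U hU hUne m
    obtain ⟨x, hxS, hxU⟩ := hD.exists_mem_open hU hUne
    obtain ⟨k, hk, hinf⟩ := hxS U hU hxU m
    obtain ⟨a, ha⟩ := hinf.nonempty
    refine ⟨k, hk, (T ^ a) x, by simpa using ha 0 (Nat.zero_le m), fun j hj => ?_⟩
    have := ha j hj
    show (T ^ (j * k)) ((T ^ a) x) ∈ U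
    have hpow : (T ^ (a + j * k)) x = (T ^ (j * k)) ((T ^ a) x) := by
      rw [add_comm, pow_add]; rfl
    rw [← hpow]; exact this
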